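/- Let α > 0, β ∈ ℝ, T > 0, k > 0. The eigenvalue problem −f''(x) + (−α δ(x) + β δ(x−T)) f(x) = −k² f(x) — interpreted as: f is continuous, square-integrable, satisfies f'' = k² f on ℝ \ {0, T}, with jump conditions f'(0⁺) − f'(0⁻) = −α f(0) and f'(T⁺) − f'(T⁻) = β f(T) — has no nonzero square-integrable solution for any k > 0 if and only if αT < 1 and αT ≤ βT(1 − αT). -/

import Mathlib

open MeasureTheory Filter Real

noncomputable def Efun (a b k : ℝ) : ℝ → ℝ := fun x => a * Real.exp (k*x) + b * Real.exp (-(k*x))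

lemma Efun_hasDerivAt (a b k x : ℝ) :
    HasDerivAt (Efun a b k) (Efun (a*k) (-(b*k)) k x) x := by
  have h1 : HasDerivAt (fun x : ℝ => Real.exp (k*x)) (Real.exp (k*x) * k) x :=
    by simpa using ((hasDerivAt_id x).const_mul k).exp
  have h2 : HasDerivAt (fun x : ℝ => Real.exp (-(k*x))) (Real.exp (-(k*x)) * (-k)) x := by
    simpa using (((hasDerivAt_id x).const_mul k).neg).exp
  have := (h1.const_mul a).add (h2.const_mul b)
  exact this.congr_deriv (by unfold Efun; ring)

lemma Efun_deriv (a b k : ℝ) : deriv (Efun a b k) = Efun (a*k) (-(b*k)) k :=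
  funext fun x => (Efun_hasDerivAt a b k x).deriv

lemma Efun_cont (a b k : ℝ) : Continuous (Efun a b k) := by
  unfold Efun; fun_prop

lemma Efun_second (a b k x : ℝ) :
    deriv (deriv (Efun a b k)) x = k^2 * Efun a b k x := by
  rw [Efun_deriv, Efun_deriv]
  unfold Efun; ring

lemma local_eq_nhds {f : ℝ → ℝ} {s : Set ℝ} {x a b k : ℝ} (hs : IsOpen s) (hx : x ∈ s)
    (heq : ∀ y ∈ s, f y = Efun a b k y) : f =ᶠ[nhds x] Efun a b k :=
  Filter.eventually_iff_exists_mem.2 ⟨s, hs.mem_nhds hx, heq⟩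

lemma local_struct {f : ℝ → ℝ} {s : Set ℝ} {x a b k : ℝ} (hs : IsOpen s) (hx : x ∈ s)
    (heq : ∀ y ∈ s, f y = Efun a b k y) :
    DifferentiableAt ℝ f x ∧ DifferentiableAt ℝ (deriv f) x ∧
      deriv (deriv f) x = k^2 * f x ∧ deriv f x = Efun (a*k) (-(b*k)) k x := by
  have hev : f =ᶠ[nhds x] Efun a b k := local_eq_nhds hs hx heq
  have hdf : deriv f =ᶠ[nhds x] deriv (Efun a b k) := hev.deriv
  have hd1 : DifferentiableAt ℝ f x :=
    hev.differentiableAt_iff.2 (Efun_hasDerivAt a b k x).differentiableAt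
  have hdf' : deriv f =ᶠ[nhds x] Efun (a*k) (-(b*k)) k := by
    simpa [Efun_deriv] using hdf
  refine ⟨hd1, ?_, ?_, hdf'.eq_of_nhds⟩
  · exact hdf'.differentiableAt_iff.2 (Efun_hasDerivAt _ _ k x).differentiableAt
  · rw [hdf.deriv_eq, Efun_second, hev.eq_of_nhds]

lemma deriv_tendsto {f : ℝ → ℝ} {s t : Set ℝ} {c a b k : ℝ} (hs : IsOpen s)
    (heq : ∀ y ∈ s, f y = Efun a b k y) (hmem : s ∈ nhdsWithin c t) :
    Tendsto (deriv f) (nhdsWithin c t) (nhds (Efun (a*k) (-(b*k)) k c)) := by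
  have h1 : Tendsto (Efun (a*k) (-(b*k)) k) (nhdsWithin c t) (nhds (Efun (a*k) (-(b*k)) k c)) :=
    ((Efun_cont _ _ k).tendsto c).mono_left nhdsWithin_le_nhds
  refine h1.congr' ?_
  filter_upwards [hmem] with y hy
  exact ((local_struct hs hy heq).2.2.2).symm


lemma fun_tendsto {f : ℝ → ℝ} {s t : Set ℝ} {c a b k : ℝ}
    (heq : ∀ y ∈ s, f y = Efun a b k y) (hmem : s ∈ nhdsWithin c t) :
    Tendsto f (nhdsWithin c t) (nhds (Efun a b k c)) := by
  have h1 : Tendsto (Efun a b k) (nhdsWithin c t) (nhds (Efun a b k c)) :=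
    ((Efun_cont a b k).tendsto c).mono_left nhdsWithin_le_nhds
  refine h1.congr' ?_
  filter_upwards [hmem] with y hy
  exact (heq y hy).symm

lemma const_on_convex {g : ℝ → ℝ} {s : Set ℝ} (hs : IsOpen s) (hconv : Convex ℝ s)
    (hg : ∀ x ∈ s, HasDerivAt g 0 x) {x y : ℝ} (hx : x ∈ s) (hy : y ∈ s) : g x = g y := by
  refine hconv.is_const_of_fderivWithin_eq_zero
    (fun z hz => ((hg z hz).differentiableAt).differentiableWithinAt) (fun z hz => ?_) hx hy
  rw [fderivWithin_of_isOpen hs hz, ((hg z hz).hasFDerivAt).fderiv]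
  ext
  simp

lemma ode_form {f : ℝ → ℝ} {k : ℝ} (hk : 0 < k) {s : Set ℝ} (hs : IsOpen s)
    (hconv : Convex ℝ s)
    (hf : ∀ x ∈ s, DifferentiableAt ℝ f x ∧ DifferentiableAt ℝ (deriv f) x ∧
      deriv (deriv f) x = k^2 * f x) (hne : s.Nonempty) :
    ∃ A B : ℝ, ∀ x ∈ s, f x = Efun A B k x := by
  obtain ⟨x₀, hx₀⟩ := hne
  set g1 : ℝ → ℝ := fun x => (deriv f x + k * f x) * Real.exp (-(k*x)) with hg1
  set g2 : ℝ → ℝ := fun x => (deriv f x - k * f x) * Real.exp (k*x) with hg2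
  have hder1 : ∀ x ∈ s, HasDerivAt g1 0 x := by
    intro x hx
    obtain ⟨h1, h2, h3⟩ := hf x hx
    have hf' : HasDerivAt f (deriv f x) x := h1.hasDerivAt
    have hf'' : HasDerivAt (deriv f) (k^2 * f x) x := h3 ▸ h2.hasDerivAt
    have he : HasDerivAt (fun x : ℝ => Real.exp (-(k*x))) (Real.exp (-(k*x)) * (-k)) x := by
      simpa using (((hasDerivAt_id x).const_mul k).neg).exp
    have := (hf''.add (hf'.const_mul k)).mul he
    refine this.congr_deriv ?_
    simp only [Pi.add_apply]
    ring
  have hder2 : ∀ x ∈ s, HasDerivAt g2 0 x := by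
    intro x hx
    obtain ⟨h1, h2, h3⟩ := hf x hx
    have hf' : HasDerivAt f (deriv f x) x := h1.hasDerivAt
    have hf'' : HasDerivAt (deriv f) (k^2 * f x) x := h3 ▸ h2.hasDerivAt
    have he : HasDerivAt (fun x : ℝ => Real.exp (k*x)) (Real.exp (k*x) * k) x := by
      simpa using ((hasDerivAt_id x).const_mul k).exp
    have := (hf''.sub (hf'.const_mul k)).mul he
    refine this.congr_deriv ?_
    simp only [Pi.sub_apply]
    ring
  refine ⟨g1 x₀ / (2*k), -(g2 x₀) / (2*k), fun x hx => ?_⟩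
  have e1 : g1 x = g1 x₀ := const_on_convex hs hconv hder1 hx hx₀
  have e2 : g2 x = g2 x₀ := const_on_convex hs hconv hder2 hx hx₀
  have hek : Real.exp (-(k*x)) ≠ 0 := Real.exp_ne_zero _
  have hek' : Real.exp (k*x) ≠ 0 := Real.exp_ne_zero _
  have hkk : (2*k) ≠ 0 := by positivity
  have hprod : Real.exp (k*x) * Real.exp (-(k*x)) = 1 := by
    rw [← Real.exp_add]; simp
  have e1' : deriv f x + k * f x = g1 x₀ * Real.exp (k*x) := by
    have h := congrArg (fun t => t * Real.exp (k*x)) e1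
    simp only [hg1] at h
    rw [mul_assoc, mul_comm (Real.exp (-(k*x))), hprod, mul_one] at h
    exact h
  have e2' : deriv f x - k * f x = g2 x₀ * Real.exp (-(k*x)) := by
    have h := congrArg (fun t => t * Real.exp (-(k*x))) e2
    simp only [hg2] at h
    rw [mul_assoc, hprod, mul_one] at h
    exact h
  have : 2 * k * f x = g1 x₀ * Real.exp (k*x) - g2 x₀ * Real.exp (-(k*x)) := by
    linarith
  unfold Efun
  field_simp
  linarith

lemma not_int_left {a b k c : ℝ} (hk : 0 < k) (hb : b ≠ 0) :
    ¬ IntegrableOn (fun x => (Efun a b k x)^2) (Set.Iio c) := by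
  intro hint
  set M : ℝ := min c (min 0 (-(Real.log ((1 + |a|)/|b|))/k)) with hM
  have hMc : M ≤ c := min_le_left _ _
  have hM0 : M ≤ 0 := le_trans (min_le_right _ _) (min_le_left _ _)
  have hMl : M ≤ -(Real.log ((1 + |a|)/|b|))/k := le_trans (min_le_right _ _) (min_le_right _ _)
  have hbpos : 0 < |b| := abs_pos.2 hb
  have key : ∀ x ≤ M, 1 ≤ (Efun a b k x)^2 := by
    intro x hx
    have hkx : k * x ≤ k * M := by nlinarith
    have h1 : |a| * Real.exp (k*x) ≤ |a| := by
      have : Real.exp (k*x) ≤ 1 := Real.exp_le_one_iff.2 (by nlinarith)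
      nlinarith [abs_nonneg a, Real.exp_pos (k*x)]
    have h2 : 1 + |a| ≤ |b| * Real.exp (-(k*x)) := by
      have hlog : Real.log ((1 + |a|)/|b|) ≤ -(k*x) := by
        have : k * M ≤ -(Real.log ((1 + |a|)/|b|)) := by
          rw [le_div_iff₀ hk] at hMl; nlinarith
        nlinarith
      have := Real.exp_le_exp.2 hlog
      rw [Real.exp_log (by positivity)] at this
      rw [div_le_iff₀ hbpos] at this
      nlinarith
    have habs : 1 ≤ |Efun a b k x| := by
      have : 1 ≤ |b * Real.exp (-(k*x))| - |a * Real.exp (k*x)| := by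
        rw [abs_mul, abs_mul, abs_of_pos (Real.exp_pos _), abs_of_pos (Real.exp_pos _)]
        linarith
      calc 1 ≤ |b * Real.exp (-(k*x))| - |a * Real.exp (k*x)| := this
        _ ≤ |a * Real.exp (k*x) + b * Real.exp (-(k*x))| := by
            have h4 := abs_add_le (a * Real.exp (k*x) + b * Real.exp (-(k*x))) (-(a * Real.exp (k*x)))
            have h5 : a * Real.exp (k*x) + b * Real.exp (-(k*x)) + -(a * Real.exp (k*x))
                = b * Real.exp (-(k*x)) := by ring
            rw [h5, abs_neg] at h4
            linarith
        _ = |Efun a b k x| := rfl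
    calc (1:ℝ) = 1^2 := by norm_num
      _ ≤ |Efun a b k x|^2 := by nlinarith [abs_nonneg (Efun a b k x)]
      _ = (Efun a b k x)^2 := sq_abs _
  have hfin := hint.measure_ge_lt_top (ε := 1) one_pos
  have hsub : Set.Iio M ⊆ {x | 1 ≤ (Efun a b k x)^2} := by
    intro x hx
    exact key x (le_of_lt hx)
  have hvol : (volume.restrict (Set.Iio c)) (Set.Iio M) = ⊤ := by
    rw [Measure.restrict_apply measurableSet_Iio]
    have : Set.Iio M ∩ Set.Iio c = Set.Iio M := by
      rw [Set.inter_eq_left]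
      exact fun x hx => lt_of_lt_of_le hx hMc
    rw [this, Real.volume_Iio]
  have := lt_of_le_of_lt (measure_mono hsub) hfin
  rw [hvol] at this
  exact lt_irrefl _ this

lemma not_int_right {a b k c : ℝ} (hk : 0 < k) (ha : a ≠ 0) :
    ¬ IntegrableOn (fun x => (Efun a b k x)^2) (Set.Ioi c) := by
  intro hint
  have hiff := (MeasurePreserving.integrableOn_comp_preimage
    (Measure.measurePreserving_neg (volume : Measure ℝ))
    (Homeomorph.neg ℝ).measurableEmbedding
    (f := fun x => (Efun a b k x)^2) (s := Set.Ioi c)).2 hint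
  have hpre : (Neg.neg : ℝ → ℝ) ⁻¹' (Set.Ioi c) = Set.Iio (-c) := by
    ext x; simp [neg_lt, lt_neg]
  rw [hpre] at hiff
  have heq : ((fun x => (Efun a b k x)^2) ∘ (Neg.neg : ℝ → ℝ))
      = fun x => (Efun b a k x)^2 := by
    funext x
    simp only [Function.comp_apply, Efun]
    rw [show k * (-x) = -(k*x) by ring, show -(-(k*x)) = k*x by ring]
    ring
  rw [heq] at hiff
  exact not_int_left hk ha hiff

lemma int_right {d k c : ℝ} (hk : 0 < k) :
    IntegrableOn (fun x => (Efun 0 d k x)^2) (Set.Ioi c) := by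
  have h : IntegrableOn (fun x => d^2 * Real.exp (-(2*k)*x)) (Set.Ioi c) :=
    (exp_neg_integrableOn_Ioi c (by positivity)).const_mul _
  refine h.congr_fun (fun x _ => ?_) measurableSet_Ioi
  simp only [Efun]
  rw [show ((0:ℝ)*Real.exp (k*x) + d*Real.exp (-(k*x)))^2
      = d^2 * (Real.exp (-(k*x)) * Real.exp (-(k*x))) by ring, ← Real.exp_add]
  ring_nf

lemma int_left {a k c : ℝ} (hk : 0 < k) :
    IntegrableOn (fun x => (Efun a 0 k x)^2) (Set.Iio c) := by
  have h : IntegrableOn (fun x => (Efun 0 a k x)^2) (Set.Ioi (-c)) := int_right hk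
  have hiff := (MeasurePreserving.integrableOn_comp_preimage
    (Measure.measurePreserving_neg (volume : Measure ℝ))
    (Homeomorph.neg ℝ).measurableEmbedding
    (f := fun x => (Efun 0 a k x)^2) (s := Set.Ioi (-c))).2 h
  have hpre : (Neg.neg : ℝ → ℝ) ⁻¹' (Set.Ioi (-c)) = Set.Iio c := by
    ext x; simp [neg_lt, lt_neg]
  rw [hpre] at hiff
  have heq : ((fun x => (Efun 0 a k x)^2) ∘ (Neg.neg : ℝ → ℝ))
      = fun x => (Efun a 0 k x)^2 := by
    funext x
    simp only [Function.comp_apply, Efun]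
    rw [show k * (-x) = -(k*x) by ring, show -(-(k*x)) = k*x by ring]
    ring
  rwa [heq] at hiff

lemma phi_pos {α β T : ℝ} (hα : 0 < α) (hT : 0 < T) (h1 : α*T < 1)
    (h2 : α*T ≤ β*T*(1-α*T)) {u : ℝ} (hu : 0 < u) :
    0 < (u-α)*(u+β) + α*β*Real.exp (-(u*T)) := by
  have hβ : 0 < β := by
    rcases le_or_gt β 0 with h|h
    · exfalso
      nlinarith [mul_pos hα hT, mul_nonneg (neg_nonneg.2 h)
        (mul_nonneg hT.le (by linarith : (0:ℝ) ≤ 1 - α*T))]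
    · exact h
  have hc : 0 ≤ β - α - α*β*T := by nlinarith
  have hexp : 1 + -(u*T) < Real.exp (-(u*T)) := by
    have := Real.add_one_lt_exp (x := -(u*T)) (by nlinarith)
    linarith
  nlinarith [mul_pos hα hβ, mul_pos (mul_pos hα hβ) hu]

lemma phi_cont (α β T : ℝ) : Continuous (fun u : ℝ => (u-α)*(u+β) + α*β*Real.exp (-(u*T))) := by
  fun_prop

lemma root_exists {α β T : ℝ} (hα : 0 < α) (hT : 0 < T)
    (hnot : ¬(α*T < 1 ∧ α*T ≤ β*T*(1-α*T))) :
    ∃ u : ℝ, 0 < u ∧ (u-α)*(u+β) + α*β*Real.exp (-(u*T)) = 0 := by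
  set φ : ℝ → ℝ := fun u => (u-α)*(u+β) + α*β*Real.exp (-(u*T)) with hφ
  rcases lt_trichotomy β 0 with hβ | hβ | hβ
  · -- β < 0 : IVT on [α, R]
    have hφα : φ α ≤ 0 := by
      simp only [hφ, sub_self, zero_mul, zero_add]
      have := Real.exp_pos (-(α*T))
      nlinarith [mul_pos (mul_pos hα (neg_pos.2 hβ)) this]
    set R : ℝ := α + (-β) + (-(α*β)) + 1 with hR
    have hαR : α ≤ R := by nlinarith
    have hφR : 0 ≤ φ R := by
      have he1 : Real.exp (-(R*T)) ≤ 1 := Real.exp_le_one_iff.2 (by nlinarith)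
      have he0 : 0 < Real.exp (-(R*T)) := Real.exp_pos _
      simp only [hφ]
      nlinarith [mul_pos hα (neg_pos.2 hβ)]
    have := intermediate_value_Icc hαR (phi_cont α β T).continuousOn
    obtain ⟨u, hu, hu0⟩ := this ⟨hφα, hφR⟩
    exact ⟨u, lt_of_lt_of_le hα hu.1, hu0⟩
  · exact ⟨α, hα, by simp [hβ]⟩
  · -- β > 0
    have hc : β - α - α*β*T < 0 := by
      by_contra hge
      push_neg at hge
      apply hnot
      have h1 : α*T < 1 := by nlinarith
      exact ⟨h1, by nlinarith⟩
    have hder : HasDerivAt φ (β - α - α*β*T) 0 := by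
      have h1 : HasDerivAt (fun u : ℝ => (u-α)*(u+β)) (1*(0+β) + (0-α)*1) 0 :=
        ((hasDerivAt_id 0).sub_const α).mul ((hasDerivAt_id 0).add_const β)
      have hin : HasDerivAt (fun u : ℝ => -(u*T)) (-T) 0 := by
        simpa [Pi.neg_def] using ((hasDerivAt_id (0:ℝ)).mul_const T).neg
      have h2 : HasDerivAt (fun u : ℝ => α*β*Real.exp (-(u*T)))
          (α*β*(Real.exp (-(0*T)) * (-T))) 0 := (hin.exp).const_mul (α*β)
      have := h1.add h2
      exact this.congr_deriv (by simp only [zero_mul, neg_zero, Real.exp_zero]; ring)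
    have hφ0 : φ 0 = 0 := by simp [hφ]
    have hslope := hasDerivAt_iff_tendsto_slope.1 hder
    have hev : ∀ᶠ x in nhdsWithin 0 {(0:ℝ)}ᶜ, slope φ 0 x < 0 :=
      hslope.eventually_lt_const hc
    have hev' : ∀ᶠ x in nhdsWithin 0 (Set.Ioi 0), slope φ 0 x < 0 :=
      hev.filter_mono (nhdsWithin_mono 0 (fun x hx => ne_of_gt hx))
    obtain ⟨u, hu1, hu2⟩ := (hev'.and self_mem_nhdsWithin).exists
    have hu2' : (0:ℝ) < u := hu2
    have huφ : φ u < 0 := by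
      have hs : slope φ 0 u = φ u / u := by
        simp [slope_def_field, hφ0]
      rw [hs] at hu1
      by_contra hcon
      push_neg at hcon
      have := div_nonneg hcon hu2'.le
      linarith
    -- IVT on [u, R]
    set R : ℝ := u + α + 1 with hR
    have huR : u ≤ R := by nlinarith
    have hφR : 0 ≤ φ R := by
      have he0 : 0 < Real.exp (-(R*T)) := Real.exp_pos _
      simp only [hφ]
      nlinarith [mul_pos (mul_pos hα hβ) he0]
    have := intermediate_value_Icc huR (phi_cont α β T).continuousOn
    obtain ⟨w, hw, hw0⟩ := this ⟨huφ.le, hφR⟩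
    exact ⟨w, lt_of_lt_of_le hu2' hw.1, hw0⟩

lemma backward {α β T k : ℝ} (hα : 0 < α) (hT : 0 < T) (h1 : α*T < 1)
    (h2 : α*T ≤ β*T*(1-α*T)) (hk : 0 < k) :
    ¬ ∃ f : ℝ → ℝ, f ≠ 0 ∧ Continuous f ∧
        Integrable (fun x => (f x)^2) ∧
        (∀ x : ℝ, x ≠ 0 → x ≠ T →
          DifferentiableAt ℝ f x ∧ DifferentiableAt ℝ (deriv f) x ∧
          deriv (deriv f) x = k^2 * f x) ∧
        ∃ L0m L0p LTm LTp : ℝ,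
          Tendsto (deriv f) (nhdsWithin 0 (Set.Iio 0)) (nhds L0m) ∧
          Tendsto (deriv f) (nhdsWithin 0 (Set.Ioi 0)) (nhds L0p) ∧
          Tendsto (deriv f) (nhdsWithin T (Set.Iio T)) (nhds LTm) ∧
          Tendsto (deriv f) (nhdsWithin T (Set.Ioi T)) (nhds LTp) ∧
          L0p - L0m = -α * f 0 ∧ LTp - LTm = β * f T := by
  rintro ⟨f, hfne, hfc, hfint, hode, L0m, L0p, LTm, LTp, t0m, t0p, tTm, tTp, j0, jT⟩
  -- structure on the three intervals
  obtain ⟨A, B₁, hleft⟩ := ode_form hk isOpen_Iio (convex_Iio 0)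
    (fun x hx => hode x (ne_of_lt hx) (ne_of_lt (lt_trans hx hT))) ⟨-1, by norm_num⟩
  obtain ⟨B, C, hmid⟩ := ode_form hk isOpen_Ioo (convex_Ioo 0 T)
    (fun x hx => hode x (ne_of_gt hx.1) (ne_of_lt hx.2)) ⟨T/2, by constructor <;> linarith⟩
  obtain ⟨A₃, D, hright⟩ := ode_form hk isOpen_Ioi (convex_Ioi T)
    (fun x hx => hode x (ne_of_gt (lt_trans hT hx)) (ne_of_gt hx)) ⟨T+1, Set.mem_Ioi.2 (lt_add_one T)⟩
  -- decay coefficients vanish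
  have hB₁ : B₁ = 0 := by
    by_contra hB₁
    exact not_int_left hk hB₁ ((hfint.integrableOn).congr_fun
      (fun x hx => by dsimp only; rw [hleft x hx]) measurableSet_Iio)
  have hA₃ : A₃ = 0 := by
    by_contra hA₃
    exact not_int_right hk hA₃ ((hfint.integrableOn).congr_fun
      (fun x hx => by dsimp only; rw [hright x hx]) measurableSet_Ioi)
  subst hB₁ hA₃
  -- memberships
  have hmem1 : Set.Iio 0 ∈ nhdsWithin (0:ℝ) (Set.Iio 0) := self_mem_nhdsWithin
  have hmem2 : Set.Ioo 0 T ∈ nhdsWithin (0:ℝ) (Set.Ioi 0) :=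
    Ioo_mem_nhdsGT_of_mem ⟨le_refl 0, hT⟩
  have hmem3 : Set.Ioo 0 T ∈ nhdsWithin T (Set.Iio T) :=
    Ioo_mem_nhdsLT_of_mem ⟨hT, le_refl T⟩
  have hmem4 : Set.Ioi T ∈ nhdsWithin T (Set.Ioi T) := self_mem_nhdsWithin
  -- function values at 0 and T
  have hf0l : f 0 = Efun A 0 k 0 := tendsto_nhds_unique
    ((hfc.tendsto 0).mono_left nhdsWithin_le_nhds) (fun_tendsto hleft hmem1)
  have hf0r : f 0 = Efun B C k 0 := tendsto_nhds_unique
    ((hfc.tendsto 0).mono_left nhdsWithin_le_nhds) (fun_tendsto hmid hmem2)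
  have hfTl : f T = Efun B C k T := tendsto_nhds_unique
    ((hfc.tendsto T).mono_left nhdsWithin_le_nhds) (fun_tendsto hmid hmem3)
  have hfTr : f T = Efun 0 D k T := tendsto_nhds_unique
    ((hfc.tendsto T).mono_left nhdsWithin_le_nhds) (fun_tendsto hright hmem4)
  -- derivative limits
  have hL0m : L0m = Efun (A*k) (-(0*k)) k 0 :=
    tendsto_nhds_unique t0m (deriv_tendsto isOpen_Iio hleft hmem1)
  have hL0p : L0p = Efun (B*k) (-(C*k)) k 0 :=
    tendsto_nhds_unique t0p (deriv_tendsto isOpen_Ioo hmid hmem2)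
  have hLTm : LTm = Efun (B*k) (-(C*k)) k T :=
    tendsto_nhds_unique tTm (deriv_tendsto isOpen_Ioo hmid hmem3)
  have hLTp : LTp = Efun (0*k) (-(D*k)) k T :=
    tendsto_nhds_unique tTp (deriv_tendsto isOpen_Ioi hright hmem4)
  set e1 : ℝ := Real.exp (k*T) with he1
  set e2 : ℝ := Real.exp (-(k*T)) with he2
  have he12 : e1 * e2 = 1 := by rw [he1, he2, ← Real.exp_add]; simp
  have he2pos : 0 < e2 := Real.exp_pos _
  -- simplify values
  simp only [Efun, mul_zero, neg_zero, zero_mul, Real.exp_zero, mul_one, zero_add, add_zero]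
    at hf0l hf0r hfTl hfTr hL0m hL0p hLTm hLTp
  -- hf0l : f 0 = A ; hf0r : f 0 = B + C ; hfTl : f T = B*e1 + C*e2 ; hfTr : f T = D*e2
  rw [hL0m, hL0p, hf0l] at j0
  rw [hLTm, hLTp, hfTl] at jT
  -- continuity equations
  have hABC : A = B + C := hf0l ▸ hf0r
  have hDT : B * e1 + C * e2 = D * e2 := hfTl ▸ hfTr
  have hB : 2*k*B = (2*k-α)*A := by linear_combination j0 - k*hABC
  have hC : 2*k*C = α*A := by linear_combination (-1)*j0 - k*hABC
  -- A ≠ 0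
  have hAne : A ≠ 0 := by
    intro hA0
    apply hfne
    have hB0 : B = 0 := by
      have h := hB; rw [hA0, mul_zero] at h
      rcases mul_eq_zero.1 h with h' | h'
      · exact absurd h' (by positivity)
      · exact h'
    have hC0 : C = 0 := by
      have h := hC; rw [hA0, mul_zero] at h
      rcases mul_eq_zero.1 h with h' | h'
      · exact absurd h' (by positivity)
      · exact h'
    have hD0 : D = 0 := by
      have := hDT
      rw [hB0, hC0] at this
      simp at this
      rcases this with h | h
      · exact h
      · exact absurd h (ne_of_gt he2pos)
    funext x
    simp only [Pi.zero_apply]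
    rcases lt_trichotomy x 0 with hx | hx | hx
    · rw [hleft x hx, hA0]; simp [Efun]
    · rw [hx, hf0l, hA0]
    · rcases lt_trichotomy x T with hx' | hx' | hx'
      · rw [hmid x ⟨hx, hx'⟩, hB0, hC0]; simp [Efun]
      · rw [hx', hfTr, hD0]; simp
      · rw [hright x hx', hD0]; simp [Efun]
  -- algebra: derive the eigenvalue equation
  have key : (2*k+β)*B*e1 + β*(C*e2) = 0 := by
    linear_combination (-1) * jT + k * hDT
  have k1 : A * ((2*k+β)*(2*k-α)*e1 + α*β*e2) = 0 := by
    linear_combination (2*k) * key - ((2*k+β)*e1) * hB - (β*e2) * hC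
  have k2 : (2*k+β)*(2*k-α)*e1 + α*β*e2 = 0 :=
    (mul_eq_zero.1 k1).resolve_left hAne
  have k3 : (2*k-α)*(2*k+β) + α*β*(e2*e2) = 0 := by
    linear_combination e2 * k2 - ((2*k-α)*(2*k+β)) * he12
  -- contradiction with phi_pos at u = 2k
  have hpos := phi_pos hα hT h1 h2 (u := 2*k) (by positivity)
  have hexp : Real.exp (-(2*k*T)) = e2 * e2 := by
    rw [he2, ← Real.exp_add]; ring_nf
  rw [hexp] at hpos
  linarith [k3, hpos]

lemma forward {α β T : ℝ} (hα : 0 < α) (hT : 0 < T)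
    (hnot : ¬(α*T < 1 ∧ α*T ≤ β*T*(1-α*T))) :
    ∃ k : ℝ, 0 < k ∧ ∃ f : ℝ → ℝ, f ≠ 0 ∧ Continuous f ∧
        Integrable (fun x => (f x)^2) ∧
        (∀ x : ℝ, x ≠ 0 → x ≠ T →
          DifferentiableAt ℝ f x ∧ DifferentiableAt ℝ (deriv f) x ∧
          deriv (deriv f) x = k^2 * f x) ∧
        ∃ L0m L0p LTm LTp : ℝ,
          Tendsto (deriv f) (nhdsWithin 0 (Set.Iio 0)) (nhds L0m) ∧
          Tendsto (deriv f) (nhdsWithin 0 (Set.Ioi 0)) (nhds L0p) ∧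
          Tendsto (deriv f) (nhdsWithin T (Set.Iio T)) (nhds LTm) ∧
          Tendsto (deriv f) (nhdsWithin T (Set.Ioi T)) (nhds LTp) ∧
          L0p - L0m = -α * f 0 ∧ LTp - LTm = β * f T := by
  obtain ⟨u, hu, hroot⟩ := root_exists hα hT hnot
  set k : ℝ := u/2 with hkdef
  have hk : 0 < k := by positivity
  have hu2 : u = 2*k := by rw [hkdef]; ring
  set e1 : ℝ := Real.exp (k*T) with he1
  set e2 : ℝ := Real.exp (-(k*T)) with he2
  have he12 : e1 * e2 = 1 := by rw [he1, he2, ← Real.exp_add]; simp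
  have hroot' : (2*k-α)*(2*k+β) + α*β*(e2*e2) = 0 := by
    rw [show -(u*T) = -(k*T) + -(k*T) by rw [hu2]; ring, Real.exp_add, hu2] at hroot
    linear_combination hroot
  set D : ℝ := (2*k-α)*(e1*e1) + α with hD
  set f : ℝ → ℝ := fun x =>
    if x ≤ 0 then Efun (2*k) 0 k x else if x ≤ T then Efun (2*k-α) α k x else Efun 0 D k x
    with hfdef
  have agT : Efun (2*k-α) α k T = Efun 0 D k T := by
    simp only [Efun, hD]
    linear_combination (-((2*k-α)*e1)) * he12
  have ag0 : Efun (2*k) 0 k 0 = Efun (2*k-α) α k 0 := by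
    unfold Efun; norm_num
  -- piecewise agreement
  have heqL : ∀ y ∈ Set.Iio (0:ℝ), f y = Efun (2*k) 0 k y := fun y hy => by
    rw [hfdef]; simp only [if_pos (le_of_lt (Set.mem_Iio.1 hy))]
  have heqM : ∀ y ∈ Set.Ioo (0:ℝ) T, f y = Efun (2*k-α) α k y := fun y hy => by
    rw [hfdef]
    rw [Set.mem_Ioo] at hy
    simp only [if_neg (not_le.2 hy.1), if_pos hy.2.le]
  have heqR : ∀ y ∈ Set.Ioi T, f y = Efun 0 D k y := fun y hy => by
    rw [hfdef]
    rw [Set.mem_Ioi] at hy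
    simp only [if_neg (not_le.2 (lt_trans hT hy)), if_neg (not_le.2 hy)]
  have hf0 : f 0 = 2*k := by
    rw [hfdef]; simp [Efun]
  have hfT : f T = Efun (2*k-α) α k T := by
    rw [hfdef]; simp only [if_neg (not_le.2 hT), if_pos (le_refl T)]
  -- continuity
  have hcg : Continuous (fun x => if x ≤ T then Efun (2*k-α) α k x else Efun 0 D k x) :=
    Continuous.if_le (Efun_cont _ _ _) (Efun_cont _ _ _) continuous_id continuous_const
      (fun x hx => by rw [show x = T from hx]; exact agT)
  have hfc : Continuous f := by
    rw [hfdef]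
    refine Continuous.if_le (Efun_cont _ _ _) hcg continuous_id continuous_const
      (fun x hx => ?_)
    rw [show x = (0:ℝ) from hx]
    simpa [hT.le] using ag0
  -- nonzero
  have hfne : f ≠ 0 := by
    intro h
    have := congrFun h 0
    rw [hf0] at this
    simp at this
    linarith
  -- integrability
  have huniv : (Set.univ : Set ℝ) = Set.Iio 0 ∪ (Set.Icc 0 T ∪ Set.Ioi T) := by
    ext x
    simp only [Set.mem_univ, Set.mem_union, Set.mem_Iio, Set.mem_Icc, Set.mem_Ioi, true_iff]
    rcases lt_trichotomy x 0 with h | h | h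
    · exact Or.inl h
    · exact Or.inr (Or.inl ⟨le_of_eq h.symm, by linarith⟩)
    · rcases le_or_gt x T with h' | h'
      · exact Or.inr (Or.inl ⟨h.le, h'⟩)
      · exact Or.inr (Or.inr h')
  have hIl : IntegrableOn (fun x => (f x)^2) (Set.Iio 0) :=
    (int_left hk).congr_fun (fun x hx => by rw [heqL x hx]) measurableSet_Iio
  have hIm : IntegrableOn (fun x => (f x)^2) (Set.Icc 0 T) :=
    (hfc.pow 2).integrableOn_Icc
  have hIr : IntegrableOn (fun x => (f x)^2) (Set.Ioi T) :=
    (int_right hk).congr_fun (fun x hx => by rw [heqR x hx]) measurableSet_Ioi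
  have hint : Integrable (fun x => (f x)^2) := by
    rw [← integrableOn_univ, huniv]
    exact hIl.union (hIm.union hIr)
  -- ODE property
  have hode : ∀ x : ℝ, x ≠ 0 → x ≠ T →
      DifferentiableAt ℝ f x ∧ DifferentiableAt ℝ (deriv f) x ∧
      deriv (deriv f) x = k^2 * f x := by
    intro x hx0 hxT
    rcases lt_trichotomy x 0 with h | h | h
    · obtain ⟨d1, d2, d3, _⟩ := local_struct isOpen_Iio h heqL
      exact ⟨d1, d2, d3⟩
    · exact absurd h hx0
    · rcases lt_trichotomy x T with h' | h' | h'
      · obtain ⟨d1, d2, d3, _⟩ := local_struct isOpen_Ioo ⟨h, h'⟩ heqM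
        exact ⟨d1, d2, d3⟩
      · exact absurd h' hxT
      · obtain ⟨d1, d2, d3, _⟩ := local_struct isOpen_Ioi h' heqR
        exact ⟨d1, d2, d3⟩
  -- limits
  have hmem1 : Set.Iio 0 ∈ nhdsWithin (0:ℝ) (Set.Iio 0) := self_mem_nhdsWithin
  have hmem2 : Set.Ioo 0 T ∈ nhdsWithin (0:ℝ) (Set.Ioi 0) :=
    Ioo_mem_nhdsGT_of_mem ⟨le_refl 0, hT⟩
  have hmem3 : Set.Ioo 0 T ∈ nhdsWithin T (Set.Iio T) :=
    Ioo_mem_nhdsLT_of_mem ⟨hT, le_refl T⟩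
  have hmem4 : Set.Ioi T ∈ nhdsWithin T (Set.Ioi T) := self_mem_nhdsWithin
  refine ⟨k, hk, f, hfne, hfc, hint, hode,
    Efun (2*k*k) (-(0*k)) k 0, Efun ((2*k-α)*k) (-(α*k)) k 0,
    Efun ((2*k-α)*k) (-(α*k)) k T, Efun (0*k) (-(D*k)) k T,
    deriv_tendsto isOpen_Iio heqL hmem1,
    deriv_tendsto isOpen_Ioo heqM hmem2,
    deriv_tendsto isOpen_Ioo heqM hmem3,
    deriv_tendsto isOpen_Ioi heqR hmem4, ?_, ?_⟩
  · rw [hf0]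
    simp only [Efun, mul_zero, neg_zero, Real.exp_zero, mul_one]
    ring
  · rw [hfT]
    simp only [Efun, hD]
    have h1 : (2*k+β)*(2*k-α)*e1 + α*β*e2 = 0 := by
      linear_combination e1 * hroot' - α*β*e2 * he12
    linear_combination (-(k*(2*k-α)*e1)) * he12 - h1

theorem stmt_10 (α β T : ℝ) (hα : 0 < α) (hT : 0 < T) :
    (∀ k : ℝ, 0 < k →
      ¬ ∃ f : ℝ → ℝ, f ≠ 0 ∧ Continuous f ∧
        Integrable (fun x => (f x)^2) ∧
        (∀ x : ℝ, x ≠ 0 → x ≠ T →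
          DifferentiableAt ℝ f x ∧ DifferentiableAt ℝ (deriv f) x ∧
          deriv (deriv f) x = k^2 * f x) ∧
        ∃ L0m L0p LTm LTp : ℝ,
          Tendsto (deriv f) (nhdsWithin 0 (Set.Iio 0)) (nhds L0m) ∧
          Tendsto (deriv f) (nhdsWithin 0 (Set.Ioi 0)) (nhds L0p) ∧
          Tendsto (deriv f) (nhdsWithin T (Set.Iio T)) (nhds LTm) ∧
          Tendsto (deriv f) (nhdsWithin T (Set.Ioi T)) (nhds LTp) ∧
          L0p - L0m = -α * f 0 ∧ LTp - LTm = β * f T)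
    ↔ (α * T < 1 ∧ α * T ≤ β * T * (1 - α * T)) := by
  constructor
  · intro hmain
    by_contra hnot
    obtain ⟨k, hk, sol⟩ := forward hα hT hnot
    exact hmain k hk sol
  · rintro ⟨h1, h2⟩ k hk
    exact backward hα hT h1 h2 hk
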